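/- Let n ≥ 8 and for each i ∈ {1,...,n} let v^i ∈ ℝⁿ be a vector with v^i_i = 1/2 and |v^i_j| ≤ 1 for all j. Let y_1,...,y_n be independent random variables, each uniformly distributed on [−1,1], and set u = Σ_{i=1}^n y_i v^i. Then with probability at least 1/4, simultaneously min_i |u_i| > 1/(4n) and max_i |u_i| < 2√(n ln n). -/

import Mathlib

open MeasureTheory ProbabilityTheory
open Real
set_option maxHeartbeats 1000000


/-- mgf bound for a scaled uniform([-1,1]) random variable. -/
lemma mgf_unif_scaled_le {Ω : Type*} [MeasurableSpace Ω] (μ : Measure Ω)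
    (Y : Ω → ℝ) (hY : Measurable Y)
    (hlaw : Measure.map Y μ = (2 : ENNReal)⁻¹ • (volume.restrict (Set.Icc (-1 : ℝ) 1)))
    (a t : ℝ) (ha : |a| ≤ 1) :
    mgf (fun ω => Y ω * a) μ t ≤ Real.exp (t ^ 2 / 2) := by
  set s := t * a with hs
  have hcont : Continuous fun x : ℝ => Real.exp (s * x) := by continuity
  have h0 : mgf (fun ω => Y ω * a) μ t
      = ∫ x, Real.exp (s * x) ∂(Measure.map Y μ) := by
    rw [mgf, integral_map hY.aemeasurable hcont.aestronglyMeasurable]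
    congr 1
    funext ω
    simp only [Function.comp]
    congr 1
    ring
  rw [h0, hlaw, integral_smul_measure]
  have h1 : ∫ x in Set.Icc (-1 : ℝ) 1, Real.exp (s * x)
      = ∫ x in (-1 : ℝ)..1, Real.exp (s * x) := by
    rw [intervalIntegral.integral_of_le (by norm_num), integral_Icc_eq_integral_Ioc]
  -- symmetrization
  have hneg : ∫ x in (-1 : ℝ)..1, Real.exp (s * x)
      = ∫ x in (-1 : ℝ)..1, Real.exp (-(s * x)) := by
    have := intervalIntegral.integral_comp_neg (a := (-1:ℝ)) (b := 1)
      (fun x => Real.exp (s * x))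
    simp only [neg_neg] at this
    rw [← this]
    congr 1
    funext x
    congr 1
    ring
  have hii : ∀ c : ℝ, IntervalIntegrable (fun x => Real.exp (c * x)) volume (-1) 1 :=
    fun c => (by continuity : Continuous fun x : ℝ => Real.exp (c * x)).intervalIntegrable _ _
  have hcosh : ∫ x in (-1 : ℝ)..1, Real.exp (s * x)
      = ∫ x in (-1 : ℝ)..1, Real.cosh (s * x) := by
    have h2 : ∫ x in (-1 : ℝ)..1, Real.cosh (s * x)
        = (∫ x in (-1 : ℝ)..1, (Real.exp (s * x) + Real.exp (-(s * x)))) / 2 := by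
      rw [← intervalIntegral.integral_div]
      congr 1
      funext x
      rw [Real.cosh_eq]
    rw [h2, intervalIntegral.integral_add (hii s) (by simpa [neg_mul] using hii (-s)),
      ← hneg]
    ring
  have hbd : ∫ x in (-1 : ℝ)..1, Real.cosh (s * x)
      ≤ ∫ x in (-1 : ℝ)..1, Real.exp (t ^ 2 / 2) := by
    apply intervalIntegral.integral_mono_on (by norm_num)
    · exact (by continuity : Continuous fun x : ℝ => Real.cosh (s * x)).intervalIntegrable _ _
    · exact intervalIntegrable_const
    · intro x hx
      refine (Real.cosh_le_exp_half_sq (s * x)).trans (Real.exp_le_exp.2 ?_)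
      have hx1 : |x| ≤ 1 := abs_le.2 ⟨hx.1, hx.2⟩
      have hax : |a * x| ≤ 1 := by
        rw [abs_mul]
        exact mul_le_one₀ ha (abs_nonneg _) hx1
      have : (s * x) ^ 2 ≤ t ^ 2 := by
        have h' : (a * x) ^ 2 ≤ 1 := by
          rw [sq]
          exact abs_le_one_iff_mul_self_le_one.mp hax
        calc (s * x) ^ 2 = t ^ 2 * (a * x) ^ 2 := by ring
        _ ≤ t ^ 2 * 1 := by nlinarith [sq_nonneg t]
        _ = t ^ 2 := by ring
      linarith
  rw [h1, hcosh]
  calc ((2:ENNReal)⁻¹).toReal • ∫ x in (-1 : ℝ)..1, Real.cosh (s * x)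
      ≤ ((2:ENNReal)⁻¹).toReal • ∫ x in (-1 : ℝ)..1, Real.exp (t ^ 2 / 2) := by
        apply smul_le_smul_of_nonneg_left hbd
        simp
  _ = Real.exp (t ^ 2 / 2) := by
        rw [intervalIntegral.integral_const]
        simp
        ring

/-- a.e. bound for a uniform([-1,1]) random variable. -/
lemma ae_abs_le_one {Ω : Type*} [MeasurableSpace Ω] (μ : Measure Ω)
    (Y : Ω → ℝ) (hY : Measurable Y)
    (hlaw : Measure.map Y μ = (2 : ENNReal)⁻¹ • (volume.restrict (Set.Icc (-1 : ℝ) 1))) :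
    ∀ᵐ ω ∂μ, |Y ω| ≤ 1 := by
  rw [ae_iff]
  have hC : MeasurableSet {x : ℝ | ¬ |x| ≤ 1} := by
    have : {x : ℝ | ¬ |x| ≤ 1} = {x : ℝ | 1 < |x|} := by ext x; simp [not_le]
    rw [this]
    exact measurableSet_lt measurable_const measurable_id.abs
  have : {ω | ¬ |Y ω| ≤ 1} = Y ⁻¹' {x : ℝ | ¬ |x| ≤ 1} := rfl
  rw [this, ← Measure.map_apply hY hC, hlaw]
  rw [Measure.smul_apply, Measure.restrict_apply hC]
  have : {x : ℝ | ¬ |x| ≤ 1} ∩ Set.Icc (-1 : ℝ) 1 = ∅ := by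
    apply Set.eq_empty_iff_forall_notMem.2
    intro x hx
    exact hx.1 (abs_le.2 ⟨hx.2.1, hx.2.2⟩)
  rw [this]
  simp

lemma tail_bound {Ω : Type*} [MeasurableSpace Ω] (μ : Measure Ω) [IsProbabilityMeasure μ]
    (n : ℕ) (hn : 8 ≤ n) (a : Fin n → ℝ) (ha : ∀ j, |a j| ≤ 1)
    (y : Fin n → Ω → ℝ) (hmeas : ∀ i, Measurable (y i))
    (hindep : iIndepFun y μ)
    (hunif : ∀ i, Measure.map (y i) μ
      = (2 : ENNReal)⁻¹ • (volume.restrict (Set.Icc (-1 : ℝ) 1))) :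
    μ {ω | 2 * Real.sqrt (n * Real.log n) ≤ |∑ j, y j ω * a j|}
      ≤ ENNReal.ofReal (1 / ((n : ℝ) * n)) + ENNReal.ofReal (1 / ((n : ℝ) * n)) := by
  have hnpos : (0 : ℝ) < n := by
    have : (8:ℝ) ≤ n := by exact_mod_cast hn
    linarith
  have hnne : (n : ℝ) ≠ 0 := ne_of_gt hnpos
  set X : Fin n → Ω → ℝ := fun j ω => y j ω * a j with hX
  have hXmeas : ∀ j, Measurable (X j) := fun j => (hmeas j).mul_const _
  have hXindep : iIndepFun X μ := by
    have := hindep.comp (fun j => fun x : ℝ => x * a j)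
      (fun j => measurable_id.mul_const _)
    exact this
  have hae : ∀ j, ∀ᵐ ω ∂μ, |y j ω| ≤ 1 := fun j => ae_abs_le_one μ (y j) (hmeas j) (hunif j)
  have hint : ∀ (t : ℝ) (j : Fin n), Integrable (fun ω => rexp (t * X j ω)) μ := by
    intro t j
    refine Integrable.mono' (integrable_const (rexp |t|))
      (((hXmeas j).const_mul t).exp).aestronglyMeasurable ?_
    filter_upwards [hae j] with ω hω
    rw [Real.norm_eq_abs, abs_of_pos (Real.exp_pos _)]
    apply Real.exp_le_exp.2
    calc t * X j ω ≤ |t * X j ω| := le_abs_self _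
    _ = |t| * (|y j ω| * |a j|) := by rw [abs_mul, abs_mul]
    _ ≤ |t| * (1 * 1) := by
        apply mul_le_mul_of_nonneg_left _ (abs_nonneg t)
        exact mul_le_mul hω (ha j) (abs_nonneg _) (by norm_num)
    _ = |t| := by ring
  have hintS : ∀ t : ℝ, Integrable (fun ω => rexp (t * (∑ j, X j) ω)) μ := fun t =>
    hXindep.integrable_exp_mul_sum hXmeas (fun j _ => hint t j)
  have hmgf : ∀ t : ℝ, mgf (∑ j, X j) μ t ≤ rexp ((n : ℝ) * (t ^ 2 / 2)) := by
    intro t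
    rw [hXindep.mgf_sum hXmeas]
    calc ∏ j, mgf (X j) μ t ≤ ∏ j : Fin n, rexp (t ^ 2 / 2) := by
          apply Finset.prod_le_prod (fun j _ => mgf_nonneg)
          intro j _
          exact mgf_unif_scaled_le μ (y j) (hmeas j) (hunif j) (a j) t (ha j)
    _ = rexp ((n : ℝ) * (t ^ 2 / 2)) := by
          rw [Finset.prod_const, Finset.card_univ, Fintype.card_fin, ← Real.exp_nat_mul]
  set ε : ℝ := 2 * Real.sqrt (n * Real.log n) with hε
  have hlogn : 0 ≤ Real.log n := Real.log_nonneg (by exact_mod_cast hn.trans' (by norm_num))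
  have hε0 : 0 ≤ ε := by positivity
  have hε2 : ε ^ 2 = 4 * ((n : ℝ) * Real.log n) := by
    rw [hε, mul_pow, Real.sq_sqrt (by positivity)]
    ring
  set t0 : ℝ := ε / n with ht0def
  have ht0 : 0 ≤ t0 := by positivity
  have hkey : -t0 * ε + (n : ℝ) * (t0 ^ 2 / 2) = -(2 * Real.log n) := by
    have h1 : -t0 * ε + (n : ℝ) * (t0 ^ 2 / 2) = -(ε ^ 2) / (2 * n) := by
      field_simp [ht0def]
      have ht0n : t0 * n = ε := by rw [ht0def]; exact div_mul_cancel₀ ε hnne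
      linear_combination (t0 * n - ε) * ht0n
    rw [h1, hε2]
    field_simp
    ring
  have hexp : rexp (-(2 * Real.log n)) = 1 / ((n : ℝ) * n) := by
    rw [show (2 : ℝ) * Real.log n = Real.log n + Real.log n by ring, Real.exp_neg,
      Real.exp_add, Real.exp_log hnpos]
    rw [one_div]
  have hup : (μ {ω | ε ≤ (∑ j, X j) ω}).toReal ≤ 1 / ((n : ℝ) * n) := by
    calc (μ {ω | ε ≤ (∑ j, X j) ω}).toReal
        ≤ rexp (-t0 * ε) * mgf (∑ j, X j) μ t0 :=
          measure_ge_le_exp_mul_mgf ε ht0 (hintS t0)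
    _ ≤ rexp (-t0 * ε) * rexp ((n : ℝ) * (t0 ^ 2 / 2)) := by
          exact mul_le_mul_of_nonneg_left (hmgf t0) (Real.exp_pos _).le
    _ = rexp (-t0 * ε + (n : ℝ) * (t0 ^ 2 / 2)) := (Real.exp_add _ _).symm
    _ = 1 / ((n : ℝ) * n) := by rw [hkey, hexp]
  have hlo : (μ {ω | (∑ j, X j) ω ≤ -ε}).toReal ≤ 1 / ((n : ℝ) * n) := by
    calc (μ {ω | (∑ j, X j) ω ≤ -ε}).toReal
        ≤ rexp (-(-t0) * (-ε)) * mgf (∑ j, X j) μ (-t0) :=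
          measure_le_le_exp_mul_mgf (-ε) (neg_nonpos.2 ht0) (hintS (-t0))
    _ ≤ rexp (-(-t0) * (-ε)) * rexp ((n : ℝ) * ((-t0) ^ 2 / 2)) := by
          exact mul_le_mul_of_nonneg_left (hmgf (-t0)) (Real.exp_pos _).le
    _ = rexp (-t0 * ε + (n : ℝ) * (t0 ^ 2 / 2)) := by
          rw [← Real.exp_add]
          congr 1
          ring
    _ = 1 / ((n : ℝ) * n) := by rw [hkey, hexp]
  have hsub : {ω | ε ≤ |∑ j, y j ω * a j|}
      ⊆ {ω | ε ≤ (∑ j, X j) ω} ∪ {ω | (∑ j, X j) ω ≤ -ε} := by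
    intro ω hω
    simp only [Set.mem_setOf_eq] at hω
    have hsum : (∑ j, X j) ω = ∑ j, y j ω * a j := by
      simp [hX, Finset.sum_apply]
    rcases le_abs.mp hω with h | h
    · left; simp only [Set.mem_setOf_eq, hsum]; exact h
    · right; simp only [Set.mem_setOf_eq, hsum]; linarith
  calc μ {ω | ε ≤ |∑ j, y j ω * a j|}
      ≤ μ ({ω | ε ≤ (∑ j, X j) ω} ∪ {ω | (∑ j, X j) ω ≤ -ε}) := measure_mono hsub
  _ ≤ μ {ω | ε ≤ (∑ j, X j) ω} + μ {ω | (∑ j, X j) ω ≤ -ε} := measure_union_le _ _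
  _ ≤ ENNReal.ofReal (1 / ((n : ℝ) * n)) + ENNReal.ofReal (1 / ((n : ℝ) * n)) := by
      gcongr
      · rw [← ENNReal.ofReal_toReal (measure_ne_top μ _)]
        exact ENNReal.ofReal_le_ofReal hup
      · rw [← ENNReal.ofReal_toReal (measure_ne_top μ _)]
        exact ENNReal.ofReal_le_ofReal hlo

lemma smallball {Ω : Type*} [MeasurableSpace Ω] (μ : Measure Ω) [IsProbabilityMeasure μ]
    (n : ℕ) (hn : 8 ≤ n) (i : Fin n) (v : Fin n → Fin n → ℝ) (hvdiag : v i i = 1/2)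
    (y : Fin n → Ω → ℝ) (hmeas : ∀ i, Measurable (y i))
    (hindep : iIndepFun y μ)
    (hunif : ∀ i, Measure.map (y i) μ
      = (2 : ENNReal)⁻¹ • (volume.restrict (Set.Icc (-1 : ℝ) 1))) :
    μ {ω | |∑ j, y j ω * v j i| ≤ 1 / (4 * n)} ≤ ENNReal.ofReal (1 / (2 * n)) := by
  classical
  have hnpos : (0 : ℝ) < n := by
    have : (8:ℝ) ≤ n := by exact_mod_cast hn
    linarith
  set ε : ℝ := 1 / (4 * n) with hεdef
  have hε0 : 0 < ε := by positivity
  set Z : Fin n → Ω → ℝ := fun j ω => y j ω * (if j = i then 1 else v j i) with hZ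
  have hZmeas : ∀ j, Measurable (Z j) := fun j => (hmeas j).mul_const _
  have hZindep : iIndepFun Z μ :=
    hindep.comp (fun j => fun x : ℝ => x * (if j = i then 1 else v j i))
      (fun j => measurable_id.mul_const _)
  set S : Ω → ℝ := ∑ j ∈ Finset.univ.erase i, Z j with hS
  have hSmeas : Measurable S := by
    have : S = fun ω => ∑ j ∈ Finset.univ.erase i, Z j ω := by
      funext ω; rw [hS, Finset.sum_apply]
    rw [this]
    exact Finset.measurable_sum _ (fun j _ => hZmeas j)
  have hZi : Z i = y i := by funext ω; simp [hZ]
  have hIndep : IndepFun S (y i) μ := by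
    have := hZindep.indepFun_finsetSum_of_notMem hZmeas (Finset.notMem_erase i Finset.univ)
    rwa [hZi] at this
  have hdecomp : ∀ ω, ∑ j, y j ω * v j i = S ω + y i ω * (1 / 2) := by
    intro ω
    rw [hS, Finset.sum_apply]
    have h1 : ∑ j ∈ Finset.univ.erase i, Z j ω = ∑ j ∈ Finset.univ.erase i, y j ω * v j i := by
      apply Finset.sum_congr rfl
      intro j hj
      simp [hZ, if_neg (Finset.ne_of_mem_erase hj)]
    rw [h1, ← hvdiag]
    exact (Finset.sum_erase_add _ _ (Finset.mem_univ i)).symm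
  set E : Set (ℝ × ℝ) := {p | |p.1 + p.2 * (1 / 2)| ≤ ε} with hE
  have hEmeas : MeasurableSet E :=
    measurableSet_le ((measurable_fst.add (measurable_snd.mul_const _)).abs) measurable_const
  have hset : {ω | |∑ j, y j ω * v j i| ≤ ε} = (fun ω => (S ω, y i ω)) ⁻¹' E := by
    ext ω
    simp only [Set.mem_setOf_eq, Set.mem_preimage, hE, hdecomp ω]
  rw [hset, ← Measure.map_apply (hSmeas.prodMk (hmeas i)) hEmeas]
  rw [(indepFun_iff_map_prod_eq_prod_map_map hSmeas.aemeasurable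
    (hmeas i).aemeasurable).mp hIndep]
  rw [Measure.prod_apply hEmeas]
  have hslice : ∀ s : ℝ, (Measure.map (y i) μ) (Prod.mk s ⁻¹' E)
      ≤ ENNReal.ofReal (1 / (2 * n)) := by
    intro s
    have hsub : Prod.mk s ⁻¹' E ⊆ Set.Icc (-2 * s - 2 * ε) (-2 * s + 2 * ε) := by
      intro x hx
      simp only [Set.mem_preimage, hE, Set.mem_setOf_eq] at hx
      rw [abs_le] at hx
      constructor <;> [linarith [hx.1]; linarith [hx.2]]
    calc (Measure.map (y i) μ) (Prod.mk s ⁻¹' E)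
        ≤ (Measure.map (y i) μ) (Set.Icc (-2 * s - 2 * ε) (-2 * s + 2 * ε)) :=
          measure_mono hsub
    _ ≤ (2 : ENNReal)⁻¹ * volume (Set.Icc (-2 * s - 2 * ε) (-2 * s + 2 * ε)) := by
          rw [hunif i, Measure.smul_apply, Measure.restrict_apply measurableSet_Icc]
          exact mul_le_mul_right (measure_mono Set.inter_subset_left) _
    _ = ENNReal.ofReal (1 / (2 * n)) := by
          rw [Real.volume_Icc]
          have h4 : (-2 * s + 2 * ε) - (-2 * s - 2 * ε) = 4 * ε := by ring
          rw [h4]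
          rw [show ((2 : ENNReal))⁻¹ = ENNReal.ofReal (1/2) by
            rw [one_div, ENNReal.ofReal_inv_of_pos two_pos, ENNReal.ofReal_ofNat]]
          rw [← ENNReal.ofReal_mul (by norm_num)]
          congr 1
          rw [hεdef]
          field_simp
  calc ∫⁻ s, (Measure.map (y i) μ) (Prod.mk s ⁻¹' E) ∂(Measure.map S μ)
      ≤ ∫⁻ _, ENNReal.ofReal (1 / (2 * n)) ∂(Measure.map S μ) := lintegral_mono hslice
  _ = ENNReal.ofReal (1 / (2 * n)) := by
      haveI := Measure.isProbabilityMeasure_map (μ := μ) hSmeas.aemeasurable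
      simp


/-- Let `n ≥ 8` and let `v 1, …, v n` be vectors with `v i i = 1/2` and `|v i j| ≤ 1`,
and let `y 1, …, y n` be independent random variables, each uniform on `[-1, 1]`.
Setting `u = ∑ i, y i • v i`, with probability at least `1/4` we simultaneously have
`min_i |u i| > 1/(4n)` and `max_i |u i| < 2√(n ln n)`. -/
theorem prob_good_vector_ge_quarter
    {Ω : Type*} [MeasurableSpace Ω] (μ : Measure Ω) [IsProbabilityMeasure μ]
    (n : ℕ) (hn : 8 ≤ n)
    (v : Fin n → Fin n → ℝ)
    (hvdiag : ∀ i, v i i = 1/2) (hvbd : ∀ i j, |v i j| ≤ 1)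
    (y : Fin n → Ω → ℝ) (hmeas : ∀ i, Measurable (y i))
    (hindep : iIndepFun y μ)
    (hunif : ∀ i, Measure.map (y i) μ
      = (2 : ENNReal)⁻¹ • (volume.restrict (Set.Icc (-1 : ℝ) 1))) :
    1 / 4 ≤ μ {ω | ∀ i : Fin n,
      1 / (4 * n) < |∑ j, y j ω * v j i| ∧
      |∑ j, y j ω * v j i| < 2 * Real.sqrt (n * Real.log n)} := by
  have hnpos : (0 : ℝ) < n := by
    have : (8:ℝ) ≤ n := by exact_mod_cast hn
    linarith
  have hnne : (n : ℝ) ≠ 0 := ne_of_gt hnpos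
  set u : Fin n → Ω → ℝ := fun i ω => ∑ j, y j ω * v j i with hu
  have humeas : ∀ i, Measurable (u i) :=
    fun i => Finset.measurable_sum _ (fun j _ => (hmeas j).mul_const _)
  set G : Set Ω := {ω | ∀ i : Fin n,
      1 / (4 * n) < |u i ω| ∧ |u i ω| < 2 * Real.sqrt (n * Real.log n)} with hGdef
  have hG : MeasurableSet G := by
    have : G = ⋂ i : Fin n, ({ω | 1 / (4 * n) < |u i ω|}
        ∩ {ω | |u i ω| < 2 * Real.sqrt (n * Real.log n)}) := by
      ext ω; simp [hGdef, Set.mem_iInter, forall_and]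
    rw [this]
    exact MeasurableSet.iInter fun i =>
      (measurableSet_lt measurable_const (humeas i).abs).inter
        (measurableSet_lt (humeas i).abs measurable_const)
  have hcompl : Gᶜ = ⋃ i : Fin n, ({ω | |u i ω| ≤ 1 / (4 * n)}
      ∪ {ω | 2 * Real.sqrt (n * Real.log n) ≤ |u i ω|}) := by
    ext ω
    simp only [Set.mem_compl_iff, hGdef, Set.mem_setOf_eq, not_forall, Set.mem_iUnion,
      Set.mem_union, not_and_or, not_lt]
  have hbound : μ Gᶜ ≤ ENNReal.ofReal (3 / 4) := by
    rw [hcompl]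
    calc μ (⋃ i : Fin n, ({ω | |u i ω| ≤ 1 / (4 * n)}
        ∪ {ω | 2 * Real.sqrt (n * Real.log n) ≤ |u i ω|}))
        ≤ ∑ i : Fin n, μ ({ω | |u i ω| ≤ 1 / (4 * n)}
          ∪ {ω | 2 * Real.sqrt (n * Real.log n) ≤ |u i ω|}) := measure_iUnion_fintype_le _ _
    _ ≤ ∑ _i : Fin n, ENNReal.ofReal (1 / (2 * n) + (1 / ((n:ℝ) * n) + 1 / ((n:ℝ) * n))) := by
        apply Finset.sum_le_sum
        intro i _
        calc μ ({ω | |u i ω| ≤ 1 / (4 * n)}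
            ∪ {ω | 2 * Real.sqrt (n * Real.log n) ≤ |u i ω|})
            ≤ μ {ω | |u i ω| ≤ 1 / (4 * n)}
              + μ {ω | 2 * Real.sqrt (n * Real.log n) ≤ |u i ω|} := measure_union_le _ _
        _ ≤ ENNReal.ofReal (1 / (2 * n))
              + (ENNReal.ofReal (1 / ((n:ℝ) * n)) + ENNReal.ofReal (1 / ((n:ℝ) * n))) := by
            gcongr
            · exact smallball μ n hn i v (hvdiag i) y hmeas hindep hunif
            · exact tail_bound μ n hn (fun j => v j i) (fun j => hvbd j i) y hmeas hindep hunif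
        _ = ENNReal.ofReal (1 / (2 * n) + (1 / ((n:ℝ) * n) + 1 / ((n:ℝ) * n))) := by
            rw [← ENNReal.ofReal_add (by positivity) (by positivity),
              ← ENNReal.ofReal_add (by positivity) (by positivity)]
    _ = (n : ENNReal) * ENNReal.ofReal (1 / (2 * n) + (1 / ((n:ℝ) * n) + 1 / ((n:ℝ) * n))) := by
        rw [Finset.sum_const, Finset.card_univ, Fintype.card_fin, nsmul_eq_mul]
    _ = ENNReal.ofReal ((n : ℝ) * (1 / (2 * n) + (1 / ((n:ℝ) * n) + 1 / ((n:ℝ) * n)))) := by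
        rw [ENNReal.ofReal_mul (by positivity), ENNReal.ofReal_natCast]
    _ ≤ ENNReal.ofReal (3 / 4) := by
        apply ENNReal.ofReal_le_ofReal
        have heq : (n : ℝ) * (1 / (2 * n) + (1 / ((n:ℝ) * n) + 1 / ((n:ℝ) * n)))
            = 1 / 2 + 2 / n := by
          field_simp
          ring
        rw [heq]
        have h8 : (8 : ℝ) ≤ n := by exact_mod_cast hn
        have : 2 / (n : ℝ) ≤ 1 / 4 := by
          rw [div_le_div_iff₀ hnpos (by norm_num)]
          linarith
        linarith
  have hofReal : ENNReal.ofReal (3 / 4) = 3 / 4 := by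
    rw [ENNReal.ofReal_div_of_pos (by norm_num)]
    norm_num
  rw [hofReal] at hbound
  have hadd : μ G + μ Gᶜ = 1 := by
    rw [measure_add_measure_compl hG, measure_univ]
  by_contra hcon
  push_neg at hcon
  have h1 : (1 : ENNReal) ≤ μ G + 3 / 4 := by
    rw [← hadd]
    exact add_le_add_right hbound _
  have h2 : μ G + 3 / 4 < 1 / 4 + 3 / 4 :=
    ENNReal.add_lt_add_right (by
      intro h
      exact (ENNReal.div_lt_top (by norm_num) (by norm_num)).ne h) hcon
  have h3 : (1 / 4 + 3 / 4 : ENNReal) = 1 := by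
    rw [ENNReal.div_add_div_same]
    norm_num
    exact ENNReal.div_self (by norm_num) (by norm_num)
  rw [h3] at h2
  exact absurd (h1.trans_lt h2) (lt_irrefl _)
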